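/- Let μ̃ be the bilinear skew-symmetric map on ℝ^7 with nonzero basis brackets [e1,e2]=(3√141/188)e3+(√1551/188)e4, [e1,e3]=(3√517/188)e5, [e1,e4]=(3√47/188)e5, [e1,e5]=(√282/47)e7, [e2,e3]=(√94/94)e7, [e2,e4]=(√1222/94)e6. Then μ̃ satisfies the Jacobi identity, D = diag(1,2,3,3,4,5,5) is a derivation of (ℝ^7,μ̃), and m(μ̃) = -(89/94)·Id + (23/94)·D; in particular m(μ̃) = diag(-33/47,-43/94,-10/47,-10/47,3/94,13/47,13/47). -/

import Mathlib

open Finset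

noncomputable section

/-- `ℝ⁷` with its standard basis and standard inner product. -/
abbrev V7 : Type := Fin 7 → ℝ

/-- The standard basis vector `e i`. -/
def e (i : Fin 7) : V7 := Pi.single i 1

/-- The standard inner product on `ℝ⁷`. -/
def dot (x y : V7) : ℝ := ∑ i, x i * y i

/-- Structure constants built from a list of entries `(i, j, k, a)`, each meaning that
`μ (e i) (e j)` has component `a` along `e k` (and `μ (e j) (e i)` has component `-a`);
all unlisted basis brackets are `0`. -/
def toC (L : List (Fin 7 × Fin 7 × Fin 7 × ℝ)) (i j k : Fin 7) : ℝ :=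
  (L.map fun t =>
      (if t.1 = i ∧ t.2.1 = j ∧ t.2.2.1 = k then t.2.2.2 else 0)
    - (if t.1 = j ∧ t.2.1 = i ∧ t.2.2.1 = k then t.2.2.2 else 0)).sum

/-- The bilinear skew-symmetric map on `ℝ⁷` with structure constants `c`. -/
def br (c : Fin 7 → Fin 7 → Fin 7 → ℝ) (x y : V7) : V7 :=
  fun k => ∑ i, ∑ j, x i * y j * c i j k

lemma br_add_left (c : Fin 7 → Fin 7 → Fin 7 → ℝ) (x x' y : V7) :
    br c (x + x') y = br c x y + br c x' y := by
  funext k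
  simp only [br, Pi.add_apply, ← Finset.sum_add_distrib]
  exact Finset.sum_congr rfl fun i _ => Finset.sum_congr rfl fun j _ => by ring

lemma br_smul_left (c : Fin 7 → Fin 7 → Fin 7 → ℝ) (r : ℝ) (x y : V7) :
    br c (r • x) y = r • br c x y := by
  funext k
  simp only [br, Pi.smul_apply, smul_eq_mul, Finset.mul_sum]
  exact Finset.sum_congr rfl fun i _ => Finset.sum_congr rfl fun j _ => by ring

lemma br_add_right (c : Fin 7 → Fin 7 → Fin 7 → ℝ) (x y y' : V7) :
    br c x (y + y') = br c x y + br c x y' := by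
  funext k
  simp only [br, Pi.add_apply, ← Finset.sum_add_distrib]
  exact Finset.sum_congr rfl fun i _ => Finset.sum_congr rfl fun j _ => by ring

lemma br_smul_right (c : Fin 7 → Fin 7 → Fin 7 → ℝ) (r : ℝ) (x y : V7) :
    br c x (r • y) = r • br c x y := by
  funext k
  simp only [br, Pi.smul_apply, smul_eq_mul, Finset.mul_sum]
  exact Finset.sum_congr rfl fun i _ => Finset.sum_congr rfl fun j _ => by ring

lemma br_zero_left (c : Fin 7 → Fin 7 → Fin 7 → ℝ) (y : V7) : br c 0 y = 0 := by
  funext k; simp [br]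

lemma br_zero_right (c : Fin 7 → Fin 7 → Fin 7 → ℝ) (x : V7) : br c x 0 = 0 := by
  funext k; simp [br]

/-- The space of derivations of the algebra `(ℝ⁷, br c)`, i.e. the linear maps `D` with
`D (μ x y) = μ (D x) y + μ x (D y)` for all `x, y`, as a submodule of the endomorphisms. -/
def derivations (c : Fin 7 → Fin 7 → Fin 7 → ℝ) : Submodule ℝ (Module.End ℝ V7) where
  carrier := {D | ∀ x y, D (br c x y) = br c (D x) y + br c x (D y)}
  add_mem' := by
    intro D E hD hE x y
    simp only [LinearMap.add_apply, hD x y, hE x y, br_add_left, br_add_right]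
    abel
  zero_mem' := by
    intro x y
    simp [br_zero_left, br_zero_right]
  smul_mem' := by
    intro r D hD x y
    simp only [LinearMap.smul_apply, hD x y, smul_add, br_smul_left, br_smul_right]

/-- The Jacobi identity for the bracket `br c`. -/
def Jacobi (c : Fin 7 → Fin 7 → Fin 7 → ℝ) : Prop :=
  ∀ x y z : V7, br c (br c x y) z + br c (br c y z) x + br c (br c z x) y = 0

/-- Skew-symmetry of the bracket `br c`. -/
def Skew (c : Fin 7 → Fin 7 → Fin 7 → ℝ) : Prop :=
  ∀ x y : V7, br c x y = - br c y x

/-- The diagonal endomorphism `diag (a 1, …, a 7)` of `ℝ⁷`, `e i ↦ a i • e i`. -/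
def diagL (a : Fin 7 → ℝ) : Module.End ℝ V7 :=
  LinearMap.pi fun i => a i • LinearMap.proj i

/-- Structure constants of the bracket `μ̃`. -/
def c17 : Fin 7 → Fin 7 → Fin 7 → ℝ :=
  toC [(0, 1, 2, 3 * Real.sqrt 141 / 188),
   (0, 1, 3, Real.sqrt 1551 / 188),
   (0, 2, 4, 3 * Real.sqrt 517 / 188),
   (0, 3, 4, 3 * Real.sqrt 47 / 188),
   (0, 4, 6, Real.sqrt 282 / 47),
   (1, 2, 6, Real.sqrt 94 / 94),
   (1, 3, 5, Real.sqrt 1222 / 94)]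

lemma toC_skew (L : List (Fin 7 × Fin 7 × Fin 7 × ℝ)) (i j k : Fin 7) :
    toC L j i k = - toC L i j k := by
  unfold toC
  induction L with
  | nil => simp
  | cons h t ih => simp only [List.map_cons, List.sum_cons, ih]; ring

def supTriples : List (Fin 7 × Fin 7 × Fin 7) :=
  [(0,1,2),(1,0,2),(0,1,3),(1,0,3),(0,2,4),(2,0,4),(0,3,4),(3,0,4),
   (0,4,6),(4,0,6),(1,2,6),(2,1,6),(1,3,5),(3,1,5)]

lemma c17_eq_zero {i j k : Fin 7} (h : (i,j,k) ∉ supTriples) : c17 i j k = 0 := by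
  simp only [supTriples, List.mem_cons, List.not_mem_nil, or_false, not_or, Prod.mk.injEq] at h
  simp_all [c17, toC, @eq_comm (Fin 7)]
  obtain ⟨h1,h2,h3,h4,h5,h6,h7,h8,h9,h10,h11,h12,h13,h14⟩ := h
  rw [if_neg (fun ⟨a,b,c⟩ => h1 a b c), if_neg (fun ⟨a,b,c⟩ => h2 b a c),
     if_neg (fun ⟨a,b,c⟩ => h3 a b c), if_neg (fun ⟨a,b,c⟩ => h4 b a c),
     if_neg (fun ⟨a,b,c⟩ => h5 a b c), if_neg (fun ⟨a,b,c⟩ => h6 b a c),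
     if_neg (fun ⟨a,b,c⟩ => h7 a b c), if_neg (fun ⟨a,b,c⟩ => h8 b a c),
     if_neg (fun ⟨a,b,c⟩ => h9 a b c), if_neg (fun ⟨a,b,c⟩ => h10 b a c),
     if_neg (fun ⟨a,b,c⟩ => h11 a b c), if_neg (fun ⟨a,b,c⟩ => h12 b a c),
     if_neg (fun ⟨a,b,c⟩ => h13 a b c), if_neg (fun ⟨a,b,c⟩ => h14 b a c)]
  norm_num

lemma mem_sup {a b c : Fin 7} (h : (a,b,c) ∈ supTriples) :
    (a = 0 ∧ b = 1 ∧ c = 2) ∨ (a = 1 ∧ b = 0 ∧ c = 2) ∨ (a = 0 ∧ b = 1 ∧ c = 3) ∨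
    (a = 1 ∧ b = 0 ∧ c = 3) ∨ (a = 0 ∧ b = 2 ∧ c = 4) ∨ (a = 2 ∧ b = 0 ∧ c = 4) ∨
    (a = 0 ∧ b = 3 ∧ c = 4) ∨ (a = 3 ∧ b = 0 ∧ c = 4) ∨ (a = 0 ∧ b = 4 ∧ c = 6) ∨
    (a = 4 ∧ b = 0 ∧ c = 6) ∨ (a = 1 ∧ b = 2 ∧ c = 6) ∨ (a = 2 ∧ b = 1 ∧ c = 6) ∨
    (a = 1 ∧ b = 3 ∧ c = 5) ∨ (a = 3 ∧ b = 1 ∧ c = 5) := by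
  simpa [supTriples, Prod.ext_iff] using h

lemma chainA (a b l m k : Fin 7) (h : (a,b,l) ∈ supTriples) (h' : (l,m,k) ∈ supTriples) :
    m = a ∨ m = b := by
  rcases mem_sup h with ⟨rfl,rfl,rfl⟩|⟨rfl,rfl,rfl⟩|⟨rfl,rfl,rfl⟩|⟨rfl,rfl,rfl⟩|⟨rfl,rfl,rfl⟩|⟨rfl,rfl,rfl⟩|⟨rfl,rfl,rfl⟩|⟨rfl,rfl,rfl⟩|⟨rfl,rfl,rfl⟩|⟨rfl,rfl,rfl⟩|⟨rfl,rfl,rfl⟩|⟨rfl,rfl,rfl⟩|⟨rfl,rfl,rfl⟩|⟨rfl,rfl,rfl⟩ <;>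
  · have h2 := mem_sup h'
    omega

lemma chainB (i j a k : Fin 7) (h : (i,j,a) ∈ supTriples) (h' : (i,j,k) ∈ supTriples) :
    a = k ∨ (a = 2 ∧ k = 3) ∨ (a = 3 ∧ k = 2) := by
  rcases mem_sup h with ⟨rfl,rfl,rfl⟩|⟨rfl,rfl,rfl⟩|⟨rfl,rfl,rfl⟩|⟨rfl,rfl,rfl⟩|⟨rfl,rfl,rfl⟩|⟨rfl,rfl,rfl⟩|⟨rfl,rfl,rfl⟩|⟨rfl,rfl,rfl⟩|⟨rfl,rfl,rfl⟩|⟨rfl,rfl,rfl⟩|⟨rfl,rfl,rfl⟩|⟨rfl,rfl,rfl⟩|⟨rfl,rfl,rfl⟩|⟨rfl,rfl,rfl⟩ <;>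
  · have h2 := mem_sup h'
    omega

lemma chainC (a i j k : Fin 7) (h : (a,i,j) ∈ supTriples) (h' : (k,i,j) ∈ supTriples) :
    a = k ∨ (a = 2 ∧ k = 3) ∨ (a = 3 ∧ k = 2) := by
  rcases mem_sup h with ⟨rfl,rfl,rfl⟩|⟨rfl,rfl,rfl⟩|⟨rfl,rfl,rfl⟩|⟨rfl,rfl,rfl⟩|⟨rfl,rfl,rfl⟩|⟨rfl,rfl,rfl⟩|⟨rfl,rfl,rfl⟩|⟨rfl,rfl,rfl⟩|⟨rfl,rfl,rfl⟩|⟨rfl,rfl,rfl⟩|⟨rfl,rfl,rfl⟩|⟨rfl,rfl,rfl⟩|⟨rfl,rfl,rfl⟩|⟨rfl,rfl,rfl⟩ <;>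
  · have h2 := mem_sup h'
    omega

lemma c17_supp (i j k : Fin 7) : (i,j,k) ∈ supTriples ∨ c17 i j k = 0 := by
  by_cases h : (i,j,k) ∈ supTriples
  · exact Or.inl h
  · exact Or.inr (c17_eq_zero h)

lemma c17_skew (i j k : Fin 7) : c17 j i k = - c17 i j k := toC_skew _ i j k

lemma c17_diag (i k : Fin 7) : c17 i i k = 0 := by
  have := c17_skew i i k; linarith

lemma Pv {a b : Fin 7} (l : Fin 7) {m : Fin 7} (k : Fin 7) (h1 : m ≠ a) (h2 : m ≠ b) :
    c17 a b l * c17 l m k = 0 := by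
  rcases c17_supp a b l with h|h
  · rcases c17_supp l m k with h'|h'
    · rcases chainA _ _ _ _ _ h h' with rfl|rfl
      · exact absurd rfl h1
      · exact absurd rfl h2
    · rw [h', mul_zero]
  · rw [h, zero_mul]

lemma Jpt (i j m l k : Fin 7) :
    c17 i j l * c17 l m k + c17 j m l * c17 l i k + c17 m i l * c17 l j k = 0 := by
  by_cases hij : i = j
  · subst hij
    linear_combination c17 l m k * c17_diag i l + c17 l i k * c17_skew i m l
  · by_cases hjm : j = m
    · subst hjm
      linear_combination c17 l i k * c17_diag j l + c17 l j k * c17_skew i j l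
    · by_cases hmi : m = i
      · subst hmi
        linear_combination c17 l j k * c17_diag m l + c17 l m k * c17_skew m j l
      · rw [Pv l k hmi (fun h => hjm h.symm),
            Pv l k hij (fun h => hmi h.symm),
            Pv l k hjm (fun h => hij h.symm)]
        ring

lemma skew_c17 : Skew c17 := by
  intro x y
  funext k
  show (∑ i, ∑ j, x i * y j * c17 i j k) = -(∑ i, ∑ j, y i * x j * c17 i j k)
  rw [Finset.sum_comm, ← Finset.sum_neg_distrib]
  refine Finset.sum_congr rfl fun i _ => ?_
  rw [← Finset.sum_neg_distrib]
  refine Finset.sum_congr rfl fun j _ => ?_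
  linear_combination (y i * x j) * c17_skew j i k

lemma sum_comm3 (f : Fin 7 → Fin 7 → Fin 7 → ℝ) :
    ∑ a, ∑ b, ∑ c, f a b c = ∑ b, ∑ c, ∑ a, f a b c := by
  rw [Finset.sum_comm]
  exact Finset.sum_congr rfl fun b _ => Finset.sum_comm

lemma sum_comm3' (f : Fin 7 → Fin 7 → Fin 7 → ℝ) :
    ∑ a, ∑ b, ∑ c, f a b c = ∑ c, ∑ a, ∑ b, f a b c := by
  rw [sum_comm3]
  exact sum_comm3 fun b c a => f a b c

lemma expand (c : Fin 7 → Fin 7 → Fin 7 → ℝ) (x y z : V7) (k : Fin 7) :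
    br c (br c x y) z k = ∑ l, ∑ m, ∑ i, ∑ j, x i * y j * z m * (c i j l * c l m k) := by
  show (∑ l, ∑ m, (∑ i, ∑ j, x i * y j * c i j l) * z m * c l m k) = _
  refine Finset.sum_congr rfl fun l _ => Finset.sum_congr rfl fun m _ => ?_
  rw [Finset.sum_mul, Finset.sum_mul]
  refine Finset.sum_congr rfl fun i _ => ?_
  rw [Finset.sum_mul, Finset.sum_mul]
  exact Finset.sum_congr rfl fun j _ => by ring

lemma jacobi_c17 : Jacobi c17 := by
  intro x y z
  funext k
  rw [Pi.add_apply, Pi.add_apply, Pi.zero_apply,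
      expand c17 x y z k, expand c17 y z x k, expand c17 z x y k]
  have e1 : (∑ l, ∑ m, ∑ i, ∑ j, x i * y j * z m * (c17 i j l * c17 l m k))
      = ∑ l, ∑ i, ∑ j, ∑ m, x i * y j * z m * (c17 i j l * c17 l m k) :=
    Finset.sum_congr rfl fun l _ =>
      sum_comm3 fun m i j => x i * y j * z m * (c17 i j l * c17 l m k)
  have e3 : (∑ l, ∑ m, ∑ i, ∑ j, z i * x j * y m * (c17 i j l * c17 l m k))
      = ∑ l, ∑ j, ∑ m, ∑ i, z i * x j * y m * (c17 i j l * c17 l m k) :=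
    Finset.sum_congr rfl fun l _ =>
      sum_comm3' fun m i j => z i * x j * y m * (c17 i j l * c17 l m k)
  rw [e1, e3, ← Finset.sum_add_distrib, ← Finset.sum_add_distrib]
  refine Finset.sum_eq_zero fun l _ => ?_
  rw [← Finset.sum_add_distrib, ← Finset.sum_add_distrib]
  refine Finset.sum_eq_zero fun p _ => ?_
  rw [← Finset.sum_add_distrib, ← Finset.sum_add_distrib]
  refine Finset.sum_eq_zero fun q _ => ?_
  rw [← Finset.sum_add_distrib, ← Finset.sum_add_distrib]
  refine Finset.sum_eq_zero fun r _ => ?_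
  linear_combination (x p * y q * z r) * Jpt p q r l k

lemma diagL_apply (a : Fin 7 → ℝ) (x : V7) (k : Fin 7) : diagL a x k = a k * x k := rfl

lemma hd_c17 (i j k : Fin 7) :
    (![1, 2, 3, 3, 4, 5, 5] : Fin 7 → ℝ) k * c17 i j k
      = ((![1, 2, 3, 3, 4, 5, 5] : Fin 7 → ℝ) i + (![1, 2, 3, 3, 4, 5, 5] : Fin 7 → ℝ) j) * c17 i j k := by
  rcases c17_supp i j k with h|h
  · rcases mem_sup h with ⟨rfl,rfl,rfl⟩|⟨rfl,rfl,rfl⟩|⟨rfl,rfl,rfl⟩|⟨rfl,rfl,rfl⟩|⟨rfl,rfl,rfl⟩|⟨rfl,rfl,rfl⟩|⟨rfl,rfl,rfl⟩|⟨rfl,rfl,rfl⟩|⟨rfl,rfl,rfl⟩|⟨rfl,rfl,rfl⟩|⟨rfl,rfl,rfl⟩|⟨rfl,rfl,rfl⟩|⟨rfl,rfl,rfl⟩|⟨rfl,rfl,rfl⟩ <;> norm_num [show (![1,2,3,3,4,5,5] : Fin 7 → ℝ) 0 = 1 from rfl, show (![1,2,3,3,4,5,5] : Fin 7 → ℝ)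 1 = 2 from rfl, show (![1,2,3,3,4,5,5] : Fin 7 → ℝ) 2 = 3 from rfl, show (![1,2,3,3,4,5,5] : Fin 7 → ℝ) 3 = 3 from rfl, show (![1,2,3,3,4,5,5] : Fin 7 → ℝ) 4 = 4 from rfl, show (![1,2,3,3,4,5,5] : Fin 7 → ℝ) 5 = 5 from rfl, show (![1,2,3,3,4,5,5] : Fin 7 → ℝ) 6 = 5 from rfl]
  · rw [h, mul_zero, mul_zero]

lemma deriv_c17 : diagL ![1, 2, 3, 3, 4, 5, 5] ∈ derivations c17 := by
  show ∀ x y, diagL ![1, 2, 3, 3, 4, 5, 5] (br c17 x y)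
      = br c17 (diagL ![1, 2, 3, 3, 4, 5, 5] x) y + br c17 x (diagL ![1, 2, 3, 3, 4, 5, 5] y)
  intro x y
  funext k
  rw [Pi.add_apply, diagL_apply]
  show (![1, 2, 3, 3, 4, 5, 5] : Fin 7 → ℝ) k * (∑ i, ∑ j, x i * y j * c17 i j k)
      = (∑ i, ∑ j, diagL ![1, 2, 3, 3, 4, 5, 5] x i * y j * c17 i j k)
      + (∑ i, ∑ j, x i * diagL ![1, 2, 3, 3, 4, 5, 5] y j * c17 i j k)
  rw [Finset.mul_sum, ← Finset.sum_add_distrib]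
  refine Finset.sum_congr rfl fun i _ => ?_
  rw [Finset.mul_sum, ← Finset.sum_add_distrib]
  refine Finset.sum_congr rfl fun j _ => ?_
  rw [diagL_apply, diagL_apply]
  linear_combination (x i * y j) * hd_c17 i j k

lemma RD0 : -2 * (∑ i, ∑ j, c17 0 i j * c17 0 i j) + (∑ i, ∑ j, c17 i j 0 * c17 i j 0) = -33/47 := by
  have h141 : Real.sqrt 141 * Real.sqrt 141 = 141 := Real.mul_self_sqrt (by norm_num)
  have h1551 : Real.sqrt 1551 * Real.sqrt 1551 = 1551 := Real.mul_self_sqrt (by norm_num)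
  have h517 : Real.sqrt 517 * Real.sqrt 517 = 517 := Real.mul_self_sqrt (by norm_num)
  have h47 : Real.sqrt 47 * Real.sqrt 47 = 47 := Real.mul_self_sqrt (by norm_num)
  have h282 : Real.sqrt 282 * Real.sqrt 282 = 282 := Real.mul_self_sqrt (by norm_num)
  have h94 : Real.sqrt 94 * Real.sqrt 94 = 94 := Real.mul_self_sqrt (by norm_num)
  have h1222 : Real.sqrt 1222 * Real.sqrt 1222 = 1222 := Real.mul_self_sqrt (by norm_num)
  have hcross : Real.sqrt 141 * Real.sqrt 1551 = 3 * (Real.sqrt 517 * Real.sqrt 47) := by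
    rw [← Real.sqrt_mul (by norm_num), ← Real.sqrt_mul (by norm_num)]
    rw [show (141:ℝ)*1551 = 3^2*(517*47) by norm_num, Real.sqrt_mul (by positivity),
        Real.sqrt_sq (by norm_num)]
  simp (config := { decide := true }) only [Fin.sum_univ_seven, c17, toC, List.map_cons,
    List.map_nil, List.sum_cons, List.sum_nil, if_true, if_false, and_self, and_true, true_and]
  norm_num
  nlinarith [h141, h1551, h517, h47, h282, h94, h1222, hcross, Real.sqrt_nonneg 141,
    Real.sqrt_nonneg 1551, Real.sqrt_nonneg 517, Real.sqrt_nonneg 47, Real.sqrt_nonneg 282,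
    Real.sqrt_nonneg 94, Real.sqrt_nonneg 1222]

lemma RD1 : -2 * (∑ i, ∑ j, c17 1 i j * c17 1 i j) + (∑ i, ∑ j, c17 i j 1 * c17 i j 1) = -43/94 := by
  have h141 : Real.sqrt 141 * Real.sqrt 141 = 141 := Real.mul_self_sqrt (by norm_num)
  have h1551 : Real.sqrt 1551 * Real.sqrt 1551 = 1551 := Real.mul_self_sqrt (by norm_num)
  have h517 : Real.sqrt 517 * Real.sqrt 517 = 517 := Real.mul_self_sqrt (by norm_num)
  have h47 : Real.sqrt 47 * Real.sqrt 47 = 47 := Real.mul_self_sqrt (by norm_num)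
  have h282 : Real.sqrt 282 * Real.sqrt 282 = 282 := Real.mul_self_sqrt (by norm_num)
  have h94 : Real.sqrt 94 * Real.sqrt 94 = 94 := Real.mul_self_sqrt (by norm_num)
  have h1222 : Real.sqrt 1222 * Real.sqrt 1222 = 1222 := Real.mul_self_sqrt (by norm_num)
  have hcross : Real.sqrt 141 * Real.sqrt 1551 = 3 * (Real.sqrt 517 * Real.sqrt 47) := by
    rw [← Real.sqrt_mul (by norm_num), ← Real.sqrt_mul (by norm_num)]
    rw [show (141:ℝ)*1551 = 3^2*(517*47) by norm_num, Real.sqrt_mul (by positivity),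
        Real.sqrt_sq (by norm_num)]
  simp (config := { decide := true }) only [Fin.sum_univ_seven, c17, toC, List.map_cons,
    List.map_nil, List.sum_cons, List.sum_nil, if_true, if_false, and_self, and_true, true_and]
  norm_num
  nlinarith [h141, h1551, h517, h47, h282, h94, h1222, hcross, Real.sqrt_nonneg 141,
    Real.sqrt_nonneg 1551, Real.sqrt_nonneg 517, Real.sqrt_nonneg 47, Real.sqrt_nonneg 282,
    Real.sqrt_nonneg 94, Real.sqrt_nonneg 1222]

lemma RD2 : -2 * (∑ i, ∑ j, c17 2 i j * c17 2 i j) + (∑ i, ∑ j, c17 i j 2 * c17 i j 2) = -10/47 := by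
  have h141 : Real.sqrt 141 * Real.sqrt 141 = 141 := Real.mul_self_sqrt (by norm_num)
  have h1551 : Real.sqrt 1551 * Real.sqrt 1551 = 1551 := Real.mul_self_sqrt (by norm_num)
  have h517 : Real.sqrt 517 * Real.sqrt 517 = 517 := Real.mul_self_sqrt (by norm_num)
  have h47 : Real.sqrt 47 * Real.sqrt 47 = 47 := Real.mul_self_sqrt (by norm_num)
  have h282 : Real.sqrt 282 * Real.sqrt 282 = 282 := Real.mul_self_sqrt (by norm_num)
  have h94 : Real.sqrt 94 * Real.sqrt 94 = 94 := Real.mul_self_sqrt (by norm_num)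
  have h1222 : Real.sqrt 1222 * Real.sqrt 1222 = 1222 := Real.mul_self_sqrt (by norm_num)
  have hcross : Real.sqrt 141 * Real.sqrt 1551 = 3 * (Real.sqrt 517 * Real.sqrt 47) := by
    rw [← Real.sqrt_mul (by norm_num), ← Real.sqrt_mul (by norm_num)]
    rw [show (141:ℝ)*1551 = 3^2*(517*47) by norm_num, Real.sqrt_mul (by positivity),
        Real.sqrt_sq (by norm_num)]
  simp (config := { decide := true }) only [Fin.sum_univ_seven, c17, toC, List.map_cons,
    List.map_nil, List.sum_cons, List.sum_nil, if_true, if_false, and_self, and_true, true_and]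
  norm_num
  nlinarith [h141, h1551, h517, h47, h282, h94, h1222, hcross, Real.sqrt_nonneg 141,
    Real.sqrt_nonneg 1551, Real.sqrt_nonneg 517, Real.sqrt_nonneg 47, Real.sqrt_nonneg 282,
    Real.sqrt_nonneg 94, Real.sqrt_nonneg 1222]

lemma RD3 : -2 * (∑ i, ∑ j, c17 3 i j * c17 3 i j) + (∑ i, ∑ j, c17 i j 3 * c17 i j 3) = -10/47 := by
  have h141 : Real.sqrt 141 * Real.sqrt 141 = 141 := Real.mul_self_sqrt (by norm_num)
  have h1551 : Real.sqrt 1551 * Real.sqrt 1551 = 1551 := Real.mul_self_sqrt (by norm_num)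
  have h517 : Real.sqrt 517 * Real.sqrt 517 = 517 := Real.mul_self_sqrt (by norm_num)
  have h47 : Real.sqrt 47 * Real.sqrt 47 = 47 := Real.mul_self_sqrt (by norm_num)
  have h282 : Real.sqrt 282 * Real.sqrt 282 = 282 := Real.mul_self_sqrt (by norm_num)
  have h94 : Real.sqrt 94 * Real.sqrt 94 = 94 := Real.mul_self_sqrt (by norm_num)
  have h1222 : Real.sqrt 1222 * Real.sqrt 1222 = 1222 := Real.mul_self_sqrt (by norm_num)
  have hcross : Real.sqrt 141 * Real.sqrt 1551 = 3 * (Real.sqrt 517 * Real.sqrt 47) := by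
    rw [← Real.sqrt_mul (by norm_num), ← Real.sqrt_mul (by norm_num)]
    rw [show (141:ℝ)*1551 = 3^2*(517*47) by norm_num, Real.sqrt_mul (by positivity),
        Real.sqrt_sq (by norm_num)]
  simp (config := { decide := true }) only [Fin.sum_univ_seven, c17, toC, List.map_cons,
    List.map_nil, List.sum_cons, List.sum_nil, if_true, if_false, and_self, and_true, true_and]
  norm_num
  nlinarith [h141, h1551, h517, h47, h282, h94, h1222, hcross, Real.sqrt_nonneg 141,
    Real.sqrt_nonneg 1551, Real.sqrt_nonneg 517, Real.sqrt_nonneg 47, Real.sqrt_nonneg 282,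
    Real.sqrt_nonneg 94, Real.sqrt_nonneg 1222]

lemma RD4 : -2 * (∑ i, ∑ j, c17 4 i j * c17 4 i j) + (∑ i, ∑ j, c17 i j 4 * c17 i j 4) = 3/94 := by
  have h141 : Real.sqrt 141 * Real.sqrt 141 = 141 := Real.mul_self_sqrt (by norm_num)
  have h1551 : Real.sqrt 1551 * Real.sqrt 1551 = 1551 := Real.mul_self_sqrt (by norm_num)
  have h517 : Real.sqrt 517 * Real.sqrt 517 = 517 := Real.mul_self_sqrt (by norm_num)
  have h47 : Real.sqrt 47 * Real.sqrt 47 = 47 := Real.mul_self_sqrt (by norm_num)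
  have h282 : Real.sqrt 282 * Real.sqrt 282 = 282 := Real.mul_self_sqrt (by norm_num)
  have h94 : Real.sqrt 94 * Real.sqrt 94 = 94 := Real.mul_self_sqrt (by norm_num)
  have h1222 : Real.sqrt 1222 * Real.sqrt 1222 = 1222 := Real.mul_self_sqrt (by norm_num)
  have hcross : Real.sqrt 141 * Real.sqrt 1551 = 3 * (Real.sqrt 517 * Real.sqrt 47) := by
    rw [← Real.sqrt_mul (by norm_num), ← Real.sqrt_mul (by norm_num)]
    rw [show (141:ℝ)*1551 = 3^2*(517*47) by norm_num, Real.sqrt_mul (by positivity),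
        Real.sqrt_sq (by norm_num)]
  simp (config := { decide := true }) only [Fin.sum_univ_seven, c17, toC, List.map_cons,
    List.map_nil, List.sum_cons, List.sum_nil, if_true, if_false, and_self, and_true, true_and]
  norm_num
  nlinarith [h141, h1551, h517, h47, h282, h94, h1222, hcross, Real.sqrt_nonneg 141,
    Real.sqrt_nonneg 1551, Real.sqrt_nonneg 517, Real.sqrt_nonneg 47, Real.sqrt_nonneg 282,
    Real.sqrt_nonneg 94, Real.sqrt_nonneg 1222]

lemma RD5 : -2 * (∑ i, ∑ j, c17 5 i j * c17 5 i j) + (∑ i, ∑ j, c17 i j 5 * c17 i j 5) = 13/47 := by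
  have h141 : Real.sqrt 141 * Real.sqrt 141 = 141 := Real.mul_self_sqrt (by norm_num)
  have h1551 : Real.sqrt 1551 * Real.sqrt 1551 = 1551 := Real.mul_self_sqrt (by norm_num)
  have h517 : Real.sqrt 517 * Real.sqrt 517 = 517 := Real.mul_self_sqrt (by norm_num)
  have h47 : Real.sqrt 47 * Real.sqrt 47 = 47 := Real.mul_self_sqrt (by norm_num)
  have h282 : Real.sqrt 282 * Real.sqrt 282 = 282 := Real.mul_self_sqrt (by norm_num)
  have h94 : Real.sqrt 94 * Real.sqrt 94 = 94 := Real.mul_self_sqrt (by norm_num)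
  have h1222 : Real.sqrt 1222 * Real.sqrt 1222 = 1222 := Real.mul_self_sqrt (by norm_num)
  have hcross : Real.sqrt 141 * Real.sqrt 1551 = 3 * (Real.sqrt 517 * Real.sqrt 47) := by
    rw [← Real.sqrt_mul (by norm_num), ← Real.sqrt_mul (by norm_num)]
    rw [show (141:ℝ)*1551 = 3^2*(517*47) by norm_num, Real.sqrt_mul (by positivity),
        Real.sqrt_sq (by norm_num)]
  simp (config := { decide := true }) only [Fin.sum_univ_seven, c17, toC, List.map_cons,
    List.map_nil, List.sum_cons, List.sum_nil, if_true, if_false, and_self, and_true, true_and]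
  norm_num
  nlinarith [h141, h1551, h517, h47, h282, h94, h1222, hcross, Real.sqrt_nonneg 141,
    Real.sqrt_nonneg 1551, Real.sqrt_nonneg 517, Real.sqrt_nonneg 47, Real.sqrt_nonneg 282,
    Real.sqrt_nonneg 94, Real.sqrt_nonneg 1222]

lemma RD6 : -2 * (∑ i, ∑ j, c17 6 i j * c17 6 i j) + (∑ i, ∑ j, c17 i j 6 * c17 i j 6) = 13/47 := by
  have h141 : Real.sqrt 141 * Real.sqrt 141 = 141 := Real.mul_self_sqrt (by norm_num)
  have h1551 : Real.sqrt 1551 * Real.sqrt 1551 = 1551 := Real.mul_self_sqrt (by norm_num)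
  have h517 : Real.sqrt 517 * Real.sqrt 517 = 517 := Real.mul_self_sqrt (by norm_num)
  have h47 : Real.sqrt 47 * Real.sqrt 47 = 47 := Real.mul_self_sqrt (by norm_num)
  have h282 : Real.sqrt 282 * Real.sqrt 282 = 282 := Real.mul_self_sqrt (by norm_num)
  have h94 : Real.sqrt 94 * Real.sqrt 94 = 94 := Real.mul_self_sqrt (by norm_num)
  have h1222 : Real.sqrt 1222 * Real.sqrt 1222 = 1222 := Real.mul_self_sqrt (by norm_num)
  have hcross : Real.sqrt 141 * Real.sqrt 1551 = 3 * (Real.sqrt 517 * Real.sqrt 47) := by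
    rw [← Real.sqrt_mul (by norm_num), ← Real.sqrt_mul (by norm_num)]
    rw [show (141:ℝ)*1551 = 3^2*(517*47) by norm_num, Real.sqrt_mul (by positivity),
        Real.sqrt_sq (by norm_num)]
  simp (config := { decide := true }) only [Fin.sum_univ_seven, c17, toC, List.map_cons,
    List.map_nil, List.sum_cons, List.sum_nil, if_true, if_false, and_self, and_true, true_and]
  norm_num
  nlinarith [h141, h1551, h517, h47, h282, h94, h1222, hcross, Real.sqrt_nonneg 141,
    Real.sqrt_nonneg 1551, Real.sqrt_nonneg 517, Real.sqrt_nonneg 47, Real.sqrt_nonneg 282,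
    Real.sqrt_nonneg 94, Real.sqrt_nonneg 1222]

lemma RC23 : -2 * (∑ i, ∑ j, c17 2 i j * c17 3 i j) + (∑ i, ∑ j, c17 i j 2 * c17 i j 3) = 0 := by
  have h141 : Real.sqrt 141 * Real.sqrt 141 = 141 := Real.mul_self_sqrt (by norm_num)
  have h1551 : Real.sqrt 1551 * Real.sqrt 1551 = 1551 := Real.mul_self_sqrt (by norm_num)
  have h517 : Real.sqrt 517 * Real.sqrt 517 = 517 := Real.mul_self_sqrt (by norm_num)
  have h47 : Real.sqrt 47 * Real.sqrt 47 = 47 := Real.mul_self_sqrt (by norm_num)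
  have h282 : Real.sqrt 282 * Real.sqrt 282 = 282 := Real.mul_self_sqrt (by norm_num)
  have h94 : Real.sqrt 94 * Real.sqrt 94 = 94 := Real.mul_self_sqrt (by norm_num)
  have h1222 : Real.sqrt 1222 * Real.sqrt 1222 = 1222 := Real.mul_self_sqrt (by norm_num)
  have hcross : Real.sqrt 141 * Real.sqrt 1551 = 3 * (Real.sqrt 517 * Real.sqrt 47) := by
    rw [← Real.sqrt_mul (by norm_num), ← Real.sqrt_mul (by norm_num)]
    rw [show (141:ℝ)*1551 = 3^2*(517*47) by norm_num, Real.sqrt_mul (by positivity),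
        Real.sqrt_sq (by norm_num)]
  simp (config := { decide := true }) only [Fin.sum_univ_seven, c17, toC, List.map_cons,
    List.map_nil, List.sum_cons, List.sum_nil, if_true, if_false, and_self, and_true, true_and]
  norm_num
  nlinarith [h141, h1551, h517, h47, h282, h94, h1222, hcross, Real.sqrt_nonneg 141,
    Real.sqrt_nonneg 1551, Real.sqrt_nonneg 517, Real.sqrt_nonneg 47, Real.sqrt_nonneg 282,
    Real.sqrt_nonneg 94, Real.sqrt_nonneg 1222]

lemma RC32 : -2 * (∑ i, ∑ j, c17 3 i j * c17 2 i j) + (∑ i, ∑ j, c17 i j 3 * c17 i j 2) = 0 := by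
  have h141 : Real.sqrt 141 * Real.sqrt 141 = 141 := Real.mul_self_sqrt (by norm_num)
  have h1551 : Real.sqrt 1551 * Real.sqrt 1551 = 1551 := Real.mul_self_sqrt (by norm_num)
  have h517 : Real.sqrt 517 * Real.sqrt 517 = 517 := Real.mul_self_sqrt (by norm_num)
  have h47 : Real.sqrt 47 * Real.sqrt 47 = 47 := Real.mul_self_sqrt (by norm_num)
  have h282 : Real.sqrt 282 * Real.sqrt 282 = 282 := Real.mul_self_sqrt (by norm_num)
  have h94 : Real.sqrt 94 * Real.sqrt 94 = 94 := Real.mul_self_sqrt (by norm_num)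
  have h1222 : Real.sqrt 1222 * Real.sqrt 1222 = 1222 := Real.mul_self_sqrt (by norm_num)
  have hcross : Real.sqrt 141 * Real.sqrt 1551 = 3 * (Real.sqrt 517 * Real.sqrt 47) := by
    rw [← Real.sqrt_mul (by norm_num), ← Real.sqrt_mul (by norm_num)]
    rw [show (141:ℝ)*1551 = 3^2*(517*47) by norm_num, Real.sqrt_mul (by positivity),
        Real.sqrt_sq (by norm_num)]
  simp (config := { decide := true }) only [Fin.sum_univ_seven, c17, toC, List.map_cons,
    List.map_nil, List.sum_cons, List.sum_nil, if_true, if_false, and_self, and_true, true_and]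
  norm_num
  nlinarith [h141, h1551, h517, h47, h282, h94, h1222, hcross, Real.sqrt_nonneg 141,
    Real.sqrt_nonneg 1551, Real.sqrt_nonneg 517, Real.sqrt_nonneg 47, Real.sqrt_nonneg 282,
    Real.sqrt_nonneg 94, Real.sqrt_nonneg 1222]

lemma dot_e (v : V7) (k : Fin 7) : dot v (e k) = v k := by
  simp [dot, e, Pi.single_apply]

lemma br_ee (p q r : Fin 7) : br c17 (e p) (e q) r = c17 p q r := by
  simp [br, e, Pi.single_apply, ite_mul, mul_ite]

lemma offd1 {a k : Fin 7} (h : a ≠ k) (h23 : ¬(a = 2 ∧ k = 3)) (h32 : ¬(a = 3 ∧ k = 2))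
    (i j : Fin 7) : c17 a i j * c17 k i j = 0 := by
  rcases c17_supp a i j with h1|h1
  · rcases c17_supp k i j with h2|h2
    · rcases chainC a i j k h1 h2 with rfl|h'|h'
      · exact absurd rfl h
      · exact absurd h' h23
      · exact absurd h' h32
    · rw [h2, mul_zero]
  · rw [h1, zero_mul]

lemma offd2 {a k : Fin 7} (h : a ≠ k) (h23 : ¬(a = 2 ∧ k = 3)) (h32 : ¬(a = 3 ∧ k = 2))
    (i j : Fin 7) : c17 i j a * c17 i j k = 0 := by
  rcases c17_supp i j a with h1|h1
  · rcases c17_supp i j k with h2|h2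
    · rcases chainB i j a k h1 h2 with rfl|h'|h'
      · exact absurd rfl h
      · exact absurd h' h23
      · exact absurd h' h32
    · rw [h2, mul_zero]
  · rw [h1, zero_mul]

lemma mval (m : Module.End ℝ V7)
    (h : ∀ x y : V7, dot (m x) y =
        -2 * ∑ i, ∑ j, dot (br c17 x (e i)) (e j) * dot (br c17 y (e i)) (e j)
        + ∑ i, ∑ j, dot (br c17 (e i) (e j)) x * dot (br c17 (e i) (e j)) y) :
    m = diagL ![-33/47, -43/94, -10/47, -10/47, 3/94, 13/47, 13/47] := by
  have key : ∀ a k : Fin 7,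
      m (e a) k = (![-33/47, -43/94, -10/47, -10/47, 3/94, 13/47, 13/47] : Fin 7 → ℝ) k * e a k := by
    intro a k
    have hm := h (e a) (e k)
    rw [dot_e] at hm
    simp only [dot_e, br_ee] at hm
    rw [hm]
    by_cases hak : a = k
    · subst hak
      have he : e a a = 1 := by simp [e]
      rw [he, mul_one]
      fin_cases a
      exacts [RD0, RD1, RD2, RD3, RD4, RD5, RD6]
    · have he : e a k = 0 := by simp [e, Pi.single_apply]; exact fun hh => absurd hh.symm hak
      rw [he, mul_zero]
      by_cases h23 : a = 2 ∧ k = 3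
      · obtain ⟨rfl, rfl⟩ := h23; exact RC23
      · by_cases h32 : a = 3 ∧ k = 2
        · obtain ⟨rfl, rfl⟩ := h32; exact RC32
        · rw [Finset.sum_eq_zero fun i _ => Finset.sum_eq_zero fun j _ => offd1 hak h23 h32 i j,
              Finset.sum_eq_zero fun i _ => Finset.sum_eq_zero fun j _ => offd2 hak h23 h32 i j]
          ring
  refine Module.Basis.ext (Pi.basisFun ℝ (Fin 7)) fun a => ?_
  have hb : ((Pi.basisFun ℝ (Fin 7)) a : V7) = e a := by
    funext k; simp [e, Pi.basisFun_apply]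
  rw [hb]
  funext k
  rw [diagL_apply]
  exact key a k

lemma targ_eq : (-(89/94) : ℝ) • (1 : Module.End ℝ V7) + (23/94 : ℝ) • diagL ![1, 2, 3, 3, 4, 5, 5]
    = diagL ![-33/47, -43/94, -10/47, -10/47, 3/94, 13/47, 13/47] := by
  apply LinearMap.ext; intro x; funext k
  simp only [LinearMap.add_apply, LinearMap.smul_apply, Module.End.one_apply, diagL_apply,
    Pi.add_apply, Pi.smul_apply, smul_eq_mul]
  fin_cases k <;> (norm_num [show (![1, 2, 3, 3, 4, 5, 5] : Fin 7 → ℝ) (0 : Fin 7) = 1 from rfl,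
    show (![1, 2, 3, 3, 4, 5, 5] : Fin 7 → ℝ) (1 : Fin 7) = 2 from rfl,
    show (![1, 2, 3, 3, 4, 5, 5] : Fin 7 → ℝ) (2 : Fin 7) = 3 from rfl,
    show (![1, 2, 3, 3, 4, 5, 5] : Fin 7 → ℝ) (3 : Fin 7) = 3 from rfl,
    show (![1, 2, 3, 3, 4, 5, 5] : Fin 7 → ℝ) (4 : Fin 7) = 4 from rfl,
    show (![1, 2, 3, 3, 4, 5, 5] : Fin 7 → ℝ) (5 : Fin 7) = 5 from rfl,
    show (![1, 2, 3, 3, 4, 5, 5] : Fin 7 → ℝ) (6 : Fin 7) = 5 from rfl,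
    show (![-33/47, -43/94, -10/47, -10/47, 3/94, 13/47, 13/47] : Fin 7 → ℝ) (0 : Fin 7) = -33/47 from rfl,
    show (![-33/47, -43/94, -10/47, -10/47, 3/94, 13/47, 13/47] : Fin 7 → ℝ) (1 : Fin 7) = -43/94 from rfl,
    show (![-33/47, -43/94, -10/47, -10/47, 3/94, 13/47, 13/47] : Fin 7 → ℝ) (2 : Fin 7) = -10/47 from rfl,
    show (![-33/47, -43/94, -10/47, -10/47, 3/94, 13/47, 13/47] : Fin 7 → ℝ) (3 : Fin 7) = -10/47 from rfl,
    show (![-33/47, -43/94, -10/47, -10/47, 3/94, 13/47, 13/47] : Fin 7 → ℝ) (4 : Fin 7) = 3/94 from rfl,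
    show (![-33/47, -43/94, -10/47, -10/47, 3/94, 13/47, 13/47] : Fin 7 → ℝ) (5 : Fin 7) = 13/47 from rfl,
    show (![-33/47, -43/94, -10/47, -10/47, 3/94, 13/47, 13/47] : Fin 7 → ℝ) (6 : Fin 7) = 13/47 from rfl]; try ring)


/-- The bracket satisfies the Jacobi identity (and is skew-symmetric),
`D` is a derivation of it, and the unnormalized moment map `m(μ̃)` — i.e. the endomorphism
`m` of `ℝ⁷` determined by
`⟨m x, y⟩ = -2 ∑ᵢⱼ ⟨μ̃(x,eᵢ),eⱼ⟩⟨μ̃(y,eᵢ),eⱼ⟩ + ∑ᵢⱼ ⟨μ̃(eᵢ,eⱼ),x⟩⟨μ̃(eᵢ,eⱼ),y⟩` —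
equals `-(89/94) • Id + 23/94 • D`, which is the indicated diagonal map. -/
theorem stmt :
    Skew c17 ∧ Jacobi c17 ∧
    diagL ![1, 2, 3, 3, 4, 5, 5] ∈ derivations c17 ∧
    ∀ m : Module.End ℝ V7,
      (∀ x y : V7, dot (m x) y =
          -2 * ∑ i, ∑ j, dot (br c17 x (e i)) (e j) * dot (br c17 y (e i)) (e j)
          + ∑ i, ∑ j, dot (br c17 (e i) (e j)) x * dot (br c17 (e i) (e j)) y) →
      m = (-(89/94) : ℝ) • (1 : Module.End ℝ V7) + (23/94 : ℝ) • diagL ![1, 2, 3, 3, 4, 5, 5]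
      ∧ m = diagL ![-33/47, -43/94, -10/47, -10/47, 3/94, 13/47, 13/47] := by
  refine ⟨skew_c17, jacobi_c17, deriv_c17, fun m h => ?_⟩
  have hm := mval m h
  exact ⟨hm.trans targ_eq.symm, hm⟩
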